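/- Let a < b and V, L > 0 with 2L = b - a. Consider the family F of all g: ℝ → [-V, V] with support in [a, b] and total variation TV(g) ≤ 2V. Then for every ε with 0 < ε ≤ VL/3, the Kolmogorov ε-entropy of F in L¹(ℝ) satisfies H_ε(F | L¹(ℝ)) ≤ 48·V·L/ε, i.e. F can be covered by at most 2^{48VL/ε} sets of L¹-diameter at most 2ε. -/

import Mathlib

open Set MeasureTheory

/-! ### Integer coding -/

def zenc (z : ℤ) : ℕ := 2 * z.natAbs + if z < 0 then 1 else 0

def zdec (n : ℕ) : ℤ := if n % 2 = 1 then -((n / 2 : ℕ) : ℤ) else ((n / 2 : ℕ) : ℤ)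

lemma zdec_zenc (z : ℤ) : zdec (zenc z) = z := by
  rcases lt_or_ge z 0 with h | h
  · simp only [zenc, if_pos h, zdec]
    have h1 : (2 * z.natAbs + 1) % 2 = 1 := by omega
    have h2 : (2 * z.natAbs + 1) / 2 = z.natAbs := by omega
    rw [h1, h2, if_pos rfl]; omega
  · simp only [zenc, if_neg (not_lt.2 h), zdec, add_zero]
    have h1 : (2 * z.natAbs) % 2 = 0 := by omega
    have h2 : (2 * z.natAbs) / 2 = z.natAbs := by omega
    rw [h1, h2]; simp [Int.natAbs_of_nonneg h]

lemma zenc_le (z : ℤ) : (zenc z : ℝ) ≤ 2 * |(z : ℝ)| + 1 := by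
  have h : ((z.natAbs : ℕ) : ℝ) = |(z : ℝ)| := by
    rw [← Int.cast_natCast, Int.natCast_natAbs]; push_cast; rfl
  simp only [zenc]
  push_cast
  rw [h]
  split_ifs <;> norm_num

def eseq (k : ℕ → ℤ) (j : ℕ) : ℕ := zenc (k j - (if j = 0 then 0 else k (j-1)))

def psum (k : ℕ → ℤ) (j : ℕ) : ℕ := ∑ i ∈ Finset.range j, (eseq k i + 1)

lemma psum_succ (k : ℕ → ℤ) (j : ℕ) : psum k (j+1) = psum k j + (eseq k j + 1) :=
  Finset.sum_range_succ _ _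

lemma psum_mono (k : ℕ → ℤ) : StrictMono (psum k) := by
  apply strictMono_nat_of_lt_succ
  intro n; rw [psum_succ]; omega

lemma psum_pos (k : ℕ → ℤ) (j : ℕ) : 1 ≤ psum k (j+1) := by
  rw [psum_succ]; omega

noncomputable def oseq (M : ℕ) (T : Finset (Fin M)) (j : ℕ) : ℕ :=
  if h : j < T.card then ((T.orderEmbOfFin rfl) ⟨j, h⟩ : Fin M).val else 0

noncomputable def eseq' (M : ℕ) (T : Finset (Fin M)) : ℕ → ℕ
  | 0 => oseq M T 0
  | (i+1) => oseq M T (i+1) - oseq M T i - 1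

noncomputable def kdec (M : ℕ) (T : Finset (Fin M)) : ℕ → ℤ
  | 0 => zdec (eseq' M T 0)
  | (j+1) => kdec M T j + zdec (eseq' M T (j+1))

lemma orderEmbOfFin_irrel {α : Type*} [LinearOrder α] (T : Finset α) {k : ℕ}
    (h : T.card = k) (i : ℕ) (hi : i < k) (hi' : i < T.card) :
    T.orderEmbOfFin rfl ⟨i, hi'⟩ = T.orderEmbOfFin h ⟨i, hi⟩ := by subst h; rfl

lemma count_lemma (m M : ℕ) :
    ∃ φ : Fin (2^M) → (ℕ → ℤ),
      ∀ k : ℕ → ℤ, psum k m ≤ M → ∃ i, ∀ j < m, φ i j = k j := by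
  have hcardF : Fintype.card (Finset (Fin M)) = 2 ^ M := by
    simp [Fintype.card_finset]
  let E : Finset (Fin M) ≃ Fin (2^M) := Fintype.equivFinOfCardEq hcardF
  refine ⟨fun i => kdec M (E.symm i), ?_⟩
  intro k hk
  have hSlt : ∀ j : Fin m, psum k (j+1) - 1 < M := by
    intro j
    have h1 := psum_pos k j
    have h2 : psum k (j+1) ≤ psum k m := (psum_mono k).monotone (by omega)
    omega
  set Sf : Fin m → Fin M := fun j => ⟨psum k (j+1) - 1, hSlt j⟩ with hSf
  have hSmono : StrictMono Sf := by
    intro i j hij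
    simp only [hSf, Fin.mk_lt_mk, Fin.lt_def]
    have := psum_mono k (show (i:ℕ)+1 < (j:ℕ)+1 from Nat.succ_lt_succ hij)
    have := psum_pos k i
    omega
  set T : Finset (Fin M) := Finset.image Sf Finset.univ with hT
  have hcard : T.card = m := by
    rw [hT, Finset.card_image_of_injective _ hSmono.injective, Finset.card_univ,
      Fintype.card_fin]
  have hmem : ∀ y : Fin m, Sf y ∈ T := fun y => Finset.mem_image_of_mem _ (Finset.mem_univ y)
  have huniq : Sf = ⇑(T.orderEmbOfFin hcard) := Finset.orderEmbOfFin_unique hcard hmem hSmono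
  have hoseq : ∀ j (hj : j < m), oseq M T j = psum k (j+1) - 1 := by
    intro j hj
    have hj' : j < T.card := hcard ▸ hj
    rw [oseq, dif_pos hj', orderEmbOfFin_irrel T hcard j hj hj', ← huniq]
  have heseq : ∀ j < m, eseq' M T j = eseq k j := by
    intro j hj
    cases j with
    | zero =>
      have := hoseq 0 hj
      simp only [eseq']
      rw [this, psum_succ]
      simp [psum]
    | succ i =>
      have h1 := hoseq (i+1) hj
      have h2 := hoseq i (by omega)
      simp only [eseq']
      rw [h1, h2, psum_succ k (i+1)]
      have := psum_pos k i
      omega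
  refine ⟨E T, ?_⟩
  intro j hj
  show kdec M (E.symm (E T)) j = k j
  rw [Equiv.symm_apply_apply]
  induction j with
  | zero =>
    simp only [kdec]
    rw [heseq 0 hj, eseq]
    simp [zdec_zenc]
  | succ i ih =>
    simp only [kdec]
    rw [heseq (i+1) hj, eseq, ih (by omega)]
    simp only [if_neg (Nat.succ_ne_zero i), Nat.add_sub_cancel, zdec_zenc]
    ring

/-! ### Analytic lemmas -/

lemma bv_integrable {a b V : ℝ} {f : ℝ → ℝ}
    (hbd : ∀ x, |f x| ≤ V) (hsupp : ∀ x, x ∉ Set.Icc a b → f x = 0)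
    (hvar : eVariationOn f Set.univ ≠ ⊤) : Integrable f := by
  have hbv : BoundedVariationOn f Set.univ := hvar
  obtain ⟨p, q, hp, hq, hpq⟩ :=
    hbv.locallyBoundedVariationOn.exists_monotoneOn_sub_monotoneOn
  have hmeas : Measurable f := by
    rw [hpq]
    exact ((monotoneOn_univ.mp hp).measurable.sub (monotoneOn_univ.mp hq).measurable)
  refine Integrable.mono' (g := (Set.Icc a b).indicator (fun _ => V)) ?_
    hmeas.aestronglyMeasurable ?_
  · rw [integrable_indicator_iff measurableSet_Icc]
    exact integrableOn_const (by simp [Real.volume_Icc])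
  · filter_upwards with y
    by_cases hy : y ∈ Set.Icc a b
    · rw [Set.indicator_of_mem hy]
      simpa using hbd y
    · rw [Set.indicator_of_notMem hy, hsupp y hy]
      simp

lemma var_partition (f : ℝ → ℝ) (x : ℕ → ℝ) (hx : Monotone x) (m : ℕ) :
    ∑ j ∈ Finset.range m, eVariationOn f (Set.Icc (x j) (x (j+1)))
      ≤ eVariationOn f (Set.Icc (x 0) (x m)) := by
  induction m with
  | zero => simp
  | succ m ih =>
    rw [Finset.sum_range_succ]
    have key := eVariationOn.Icc_add_Icc f (s := Set.univ)
      (hx (Nat.zero_le m)) (hx (Nat.le_succ m)) (Set.mem_univ (x m))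
    simp only [Set.univ_inter] at key
    calc _ ≤ eVariationOn f (Set.Icc (x 0) (x m)) + eVariationOn f (Set.Icc (x m) (x (m+1))) :=
          add_le_add_left ih _
      _ = _ := key

lemma integral_partition (F : ℝ → ℝ) (hF : Integrable F) (x : ℕ → ℝ) (hx : Monotone x) (m : ℕ) :
    ∫ y in Set.Ico (x 0) (x m), F y
      = ∑ j ∈ Finset.range m, ∫ y in Set.Ico (x j) (x (j+1)), F y := by
  induction m with
  | zero => simp
  | succ m ih =>
    rw [Finset.sum_range_succ, ← ih,
      ← MeasureTheory.setIntegral_union ?_ measurableSet_Ico hF.integrableOn hF.integrableOn,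
      Set.Ico_union_Ico_eq_Ico (hx (Nat.zero_le m)) (hx (Nat.le_succ m))]
    exact Set.disjoint_left.2 fun y hy1 hy2 => absurd hy2.1 (not_le.2 hy1.2)

lemma round_abs_le (y : ℝ) : |((round y : ℤ) : ℝ)| ≤ |y| + 1/2 := by
  have h := abs_sub_round y
  calc |((round y : ℤ) : ℝ)| = |y - (y - round y)| := by ring_nf
    _ ≤ |y| + |y - round y| := abs_sub _ _
    _ ≤ |y| + 1/2 := by linarith

lemma round_sub_le (y z : ℝ) :
    |((round y : ℤ) : ℝ) - ((round z : ℤ) : ℝ)| ≤ |y - z| + 1 := by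
  have h1 := abs_sub_round y
  have h2 := abs_sub_round z
  calc |((round y : ℤ) : ℝ) - ((round z : ℤ) : ℝ)|
      = |(y - z) - ((y - round y) - (z - round z))| := by ring_nf
    _ ≤ |y - z| + |(y - round y) - (z - round z)| := abs_sub _ _
    _ ≤ |y - z| + (|y - round y| + |z - round z|) := by
        gcongr; exact abs_sub _ _
    _ ≤ |y - z| + 1 := by linarith

theorem stmt_17 (a b V L ε : ℝ) (hab : a < b) (hV : 0 < V) (hL : 0 < L)
    (h2L : 2 * L = b - a) (hε : 0 < ε) (hεle : ε ≤ V * L / 3) :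
    ∃ n : ℕ, (n : ℝ) ≤ (2 : ℝ) ^ (48 * V * L / ε) ∧
      ∃ C : Fin n → Set (ℝ → ℝ),
        ({ g : ℝ → ℝ | (∀ x, |g x| ≤ V) ∧ (∀ x, x ∉ Set.Icc a b → g x = 0) ∧
            eVariationOn g Set.univ ≤ ENNReal.ofReal (2 * V) } ⊆ ⋃ i, C i) ∧
        ∀ i : Fin n, ∀ g ∈ C i, ∀ h ∈ C i, ∫ x, |g x - h x| ≤ 2 * ε := by
  set t : ℝ := V * L / ε with hts
  have ht0 : 0 < t := by positivity
  have ht3 : 3 ≤ t := by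
    rw [hts, le_div_iff₀ hε]; linarith
  set δ : ℝ := ε / (2*L) with hδs
  have hδ : 0 < δ := by positivity
  set m : ℕ := ⌈8*t⌉₊ with hms
  have hm1 : 8*t ≤ (m:ℝ) := Nat.le_ceil _
  have hm2 : (m:ℝ) ≤ 8*t + 1 := (Nat.ceil_lt_add_one (by positivity)).le
  have hm0 : 0 < m := by
    have h : (0:ℝ) < (m:ℝ) := lt_of_lt_of_le (by linarith) hm1
    exact_mod_cast h
  have hmR : (0:ℝ) < (m:ℝ) := by exact_mod_cast hm0
  set w : ℝ := (b-a)/m with hws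
  have hw : 0 < w := div_pos (by linarith) hmR
  set x : ℕ → ℝ := fun j => a + j * w with hxs
  have hxmono : Monotone x := by
    intro i j hij
    simp only [hxs]
    have : (i:ℝ) ≤ (j:ℝ) := by exact_mod_cast hij
    nlinarith
  have hx0 : x 0 = a := by simp [hxs]
  have hxm : x m = b := by
    simp only [hxs, hws]
    field_simp
    ring
  have hxsucc : ∀ j : ℕ, x (j+1) - x j = w := by
    intro j
    simp only [hxs]
    push_cast
    ring
  have hVδ : V / δ = 2 * t := by
    rw [hδs, hts]
    field_simp
  set M : ℕ := ⌈44*t⌉₊ + 3 with hMs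
  obtain ⟨φ, hφ⟩ := count_lemma m M
  refine ⟨2^M, ?_, ?_⟩
  · have hM : (M:ℝ) ≤ 48*t := by
      have hc : ((⌈44*t⌉₊ : ℕ):ℝ) ≤ 44*t+1 := (Nat.ceil_lt_add_one (by positivity)).le
      have : (M:ℝ) = ((⌈44*t⌉₊ : ℕ):ℝ) + 3 := by rw [hMs]; push_cast; ring
      rw [this]; linarith
    have he : 48 * V * L / ε = 48 * t := by rw [hts]; ring
    rw [he]
    calc ((2^M : ℕ):ℝ) = (2:ℝ)^(M:ℕ) := by push_cast; ring
      _ = (2:ℝ)^((M:ℕ):ℝ) := (Real.rpow_natCast 2 M).symm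
      _ ≤ (2:ℝ)^(48*t) := Real.rpow_le_rpow_of_exponent_le one_le_two hM
  refine ⟨fun i => {g | (∀ y, |g y| ≤ V) ∧ (∀ y, y ∉ Set.Icc a b → g y = 0) ∧
      eVariationOn g Set.univ ≤ ENNReal.ofReal (2*V) ∧
      ∀ j < m, round (g (x j)/δ) = φ i j}, ?_, ?_⟩
  · -- coverage
    rintro f ⟨fb, fs, fv⟩
    set k : ℕ → ℤ := fun j => round (f (x j)/δ) with hks
    -- total variation of samples
    have hsum : ∑ i ∈ Finset.range (m-1), |f (x (i+1)) - f (x i)| ≤ 2*V := by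
      have h1 := eVariationOn.sum_le (f := f) (n := m-1) hxmono (fun i => Set.mem_univ (x i))
      have h2 : ∑ i ∈ Finset.range (m-1), edist (f (x (i+1))) (f (x i))
          = ENNReal.ofReal (∑ i ∈ Finset.range (m-1), |f (x (i+1)) - f (x i)|) := by
        rw [ENNReal.ofReal_sum_of_nonneg (fun i _ => abs_nonneg _)]
        congr 1
        funext i
        rw [edist_dist, Real.dist_eq]
      rw [h2] at h1
      exact (ENNReal.ofReal_le_ofReal_iff (by positivity)).mp (h1.trans fv)
    have hpsum : psum k m ≤ M := by
      have hcast : ((psum k m : ℕ):ℝ) ≤ (M:ℝ) := by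
        have hterm0 : ((eseq k 0 : ℕ):ℝ) + 1 ≤ 4*t + 3 := by
          have h1 : (eseq k 0 : ℝ) ≤ 2 * |((k 0 : ℤ):ℝ)| + 1 := by
            have := zenc_le (k 0 - (if (0:ℕ) = 0 then 0 else k (0-1)))
            simpa [eseq] using this
          have h2 : |((k 0 : ℤ):ℝ)| ≤ 2*t + 1/2 := by
            have h3 := round_abs_le (f (x 0) / δ)
            have h4 : |f (x 0) / δ| ≤ V / δ := by
              rw [abs_div, abs_of_pos hδ]
              gcongr
              exact fb (x 0)
            calc |((k 0 : ℤ):ℝ)| ≤ |f (x 0)/δ| + 1/2 := h3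
              _ ≤ V/δ + 1/2 := by linarith
              _ = 2*t + 1/2 := by rw [hVδ]
          linarith
        have htermj : ∀ i : ℕ, ((eseq k (i+1) : ℕ):ℝ) + 1
            ≤ 2 * (|f (x (i+1)) - f (x i)| / δ) + 4 := by
          intro i
          have h1 : (eseq k (i+1) : ℝ) ≤ 2 * |((k (i+1) - k i : ℤ):ℝ)| + 1 := by
            have := zenc_le (k (i+1) - (if (i+1 : ℕ) = 0 then 0 else k (i+1-1)))
            simpa [eseq] using this
          have h2 : |((k (i+1) - k i : ℤ):ℝ)| ≤ |f (x (i+1))/δ - f (x i)/δ| + 1 := by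
            push_cast
            exact round_sub_le _ _
          have h3 : |f (x (i+1))/δ - f (x i)/δ| = |f (x (i+1)) - f (x i)| / δ := by
            rw [div_sub_div_same, abs_div, abs_of_pos hδ]
          rw [h3] at h2
          linarith
        have hsplit : ((psum k m : ℕ):ℝ)
            = (∑ i ∈ Finset.range (m-1), (((eseq k (i+1) : ℕ):ℝ) + 1))
              + (((eseq k 0 : ℕ):ℝ) + 1) := by
          have hm' : m = (m-1) + 1 := by omega
          rw [psum]
          push_cast
          rw [hm', Finset.sum_range_succ']
          push_cast
          ring_nf
        rw [hsplit]
        have hs1 : ∑ i ∈ Finset.range (m-1), (((eseq k (i+1) : ℕ):ℝ) + 1)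
            ≤ ∑ i ∈ Finset.range (m-1), (2 * (|f (x (i+1)) - f (x i)| / δ) + 4) :=
          Finset.sum_le_sum (fun i _ => htermj i)
        have hs2 : ∑ i ∈ Finset.range (m-1), (2 * (|f (x (i+1)) - f (x i)| / δ) + 4)
            = (2/δ) * (∑ i ∈ Finset.range (m-1), |f (x (i+1)) - f (x i)|) + 4*((m-1 : ℕ):ℝ) := by
          have hterm : ∀ i : ℕ, 2 * (|f (x (i+1)) - f (x i)| / δ) + 4
              = (2/δ) * |f (x (i+1)) - f (x i)| + 4 := fun i => by ring
          rw [Finset.sum_congr rfl (fun i _ => hterm i), Finset.sum_add_distrib,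
            ← Finset.mul_sum, Finset.sum_const, Finset.card_range, nsmul_eq_mul]
          ring
        have hdd : (2/δ) * (∑ i ∈ Finset.range (m-1), |f (x (i+1)) - f (x i)|) ≤ 8 * t := by
          have h5 : (2/δ) * (∑ i ∈ Finset.range (m-1), |f (x (i+1)) - f (x i)|)
              ≤ (2/δ) * (2*V) := by
            apply mul_le_mul_of_nonneg_left hsum (by positivity)
          have h6 : (2/δ) * (2*V) = 4 * (V/δ) := by ring
          rw [h6, hVδ] at h5
          linarith
        have hmc : ((m-1 : ℕ):ℝ) = (m:ℝ) - 1 := by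
          rw [Nat.cast_sub (by omega : 1 ≤ m)]
          norm_num
        have hMge : 44*t + 3 ≤ (M:ℝ) := by
          have h7 : 44*t ≤ ((⌈44*t⌉₊ : ℕ):ℝ) := Nat.le_ceil _
          have h8 : (M:ℝ) = ((⌈44*t⌉₊ : ℕ):ℝ) + 3 := by rw [hMs]; push_cast; ring
          linarith
        rw [hmc] at hs2
        calc ∑ i ∈ Finset.range (m-1), (((eseq k (i+1) : ℕ):ℝ) + 1) + (((eseq k 0 : ℕ):ℝ) + 1)
            ≤ ((2/δ) * (∑ i ∈ Finset.range (m-1), |f (x (i+1)) - f (x i)|)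
                + 4*((m:ℝ)-1)) + (4*t + 3) := by
              rw [← hs2]; exact add_le_add hs1 hterm0
          _ ≤ (8*t + 4*((m:ℝ)-1)) + (4*t+3) := by linarith
          _ ≤ 44*t + 3 := by linarith
          _ ≤ (M:ℝ) := hMge
      exact_mod_cast hcast
    obtain ⟨i, hi⟩ := hφ k hpsum
    exact Set.mem_iUnion.2 ⟨i, fb, fs, fv, fun j hj => (hi j hj).symm⟩
  · -- diameter
    rintro i g ⟨gb, gs, gv, gc⟩ h ⟨hb2, hs2, hv2, hc2⟩
    have gfin : eVariationOn g Set.univ ≠ ⊤ := ne_top_of_le_ne_top ENNReal.ofReal_ne_top gv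
    have hfin : eVariationOn h Set.univ ≠ ⊤ := ne_top_of_le_ne_top ENNReal.ofReal_ne_top hv2
    have ig : Integrable g := bv_integrable gb gs gfin
    have ih2 : Integrable h := bv_integrable hb2 hs2 hfin
    have hG : Integrable (fun y => |g y - h y|) := (ig.sub ih2).abs
    set vg : ℕ → ENNReal := fun j => eVariationOn g (Set.Icc (x j) (x (j+1))) with hvgs
    set vh : ℕ → ENNReal := fun j => eVariationOn h (Set.Icc (x j) (x (j+1))) with hvhs
    have hvgfin : ∀ j, vg j ≠ ⊤ := fun j =>
      ne_top_of_le_ne_top gfin (eVariationOn.mono g (Set.subset_univ _))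
    have hvhfin : ∀ j, vh j ≠ ⊤ := fun j =>
      ne_top_of_le_ne_top hfin (eVariationOn.mono h (Set.subset_univ _))
    have e1 : ∫ y, |g y - h y| = ∫ y in Set.Icc a b, |g y - h y| := by
      have hind : (fun y => |g y - h y|) = (Set.Icc a b).indicator (fun y => |g y - h y|) := by
        funext y
        by_cases hy : y ∈ Set.Icc a b
        · rw [Set.indicator_of_mem hy]
        · rw [Set.indicator_of_notMem hy, gs y hy, hs2 y hy]
          simp
      conv_lhs => rw [hind]
      exact integral_indicator measurableSet_Icc
    have e2 : ∫ y in Set.Icc a b, |g y - h y| = ∫ y in Set.Ico a b, |g y - h y| :=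
      integral_Icc_eq_integral_Ico
    have e3 : ∫ y in Set.Ico a b, |g y - h y|
        = ∑ j ∈ Finset.range m, ∫ y in Set.Ico (x j) (x (j+1)), |g y - h y| := by
      rw [← hx0, ← hxm]
      exact integral_partition _ hG x hxmono m
    have perint : ∀ j ∈ Finset.range m,
        ∫ y in Set.Ico (x j) (x (j+1)), |g y - h y|
          ≤ w * ((vg j).toReal + (vh j).toReal + δ) := by
      intro j hj
      rw [Finset.mem_range] at hj
      have hxj : x j ≤ x (j+1) := hxmono (Nat.le_succ j)
      have hpt : ∀ y ∈ Set.Ico (x j) (x (j+1)),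
          |g y - h y| ≤ (vg j).toReal + (vh j).toReal + δ := by
        intro y hy
        have hyIcc : y ∈ Set.Icc (x j) (x (j+1)) := Set.Ico_subset_Icc_self hy
        have hxjIcc : x j ∈ Set.Icc (x j) (x (j+1)) := Set.left_mem_Icc.2 hxj
        have h1 : |g y - g (x j)| ≤ (vg j).toReal := by
          have he := eVariationOn.edist_le g hyIcc hxjIcc
          rw [edist_dist, Real.dist_eq] at he
          have := ENNReal.toReal_mono (hvgfin j) he
          rwa [ENNReal.toReal_ofReal (abs_nonneg _)] at this
        have h2 : |h y - h (x j)| ≤ (vh j).toReal := by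
          have he := eVariationOn.edist_le h hyIcc hxjIcc
          rw [edist_dist, Real.dist_eq] at he
          have := ENNReal.toReal_mono (hvhfin j) he
          rwa [ENNReal.toReal_ofReal (abs_nonneg _)] at this
        have hround : ∀ u : ℝ, |u - δ * round (u/δ)| ≤ δ/2 := by
          intro u
          have h3 := abs_sub_round (u/δ)
          have h4 : u - δ * round (u/δ) = δ * (u/δ - round (u/δ)) := by
            field_simp
          rw [h4, abs_mul, abs_of_pos hδ]
          calc δ * |u/δ - ((round (u/δ) : ℤ):ℝ)| ≤ δ * (1/2) := by
                apply mul_le_mul_of_nonneg_left h3 hδ.le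
            _ = δ/2 := by ring
        have hgc : δ * ((φ i j : ℤ):ℝ) = δ * round (g (x j)/δ) := by rw [gc j hj]
        have hhc : δ * ((φ i j : ℤ):ℝ) = δ * round (h (x j)/δ) := by rw [hc2 j hj]
        have h5 : |g (x j) - δ * ((φ i j : ℤ):ℝ)| ≤ δ/2 := by rw [hgc]; exact hround _
        have h6 : |h (x j) - δ * ((φ i j : ℤ):ℝ)| ≤ δ/2 := by rw [hhc]; exact hround _
        calc |g y - h y| = |(g y - g (x j)) + (g (x j) - δ * ((φ i j : ℤ):ℝ)) - ((h y - h (x j)) + (h (x j) - δ * ((φ i j : ℤ):ℝ)))| := by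
              ring_nf
          _ ≤ |(g y - g (x j)) + (g (x j) - δ * ((φ i j : ℤ):ℝ))| + |(h y - h (x j)) + (h (x j) - δ * ((φ i j : ℤ):ℝ))| :=
              abs_sub _ _
          _ ≤ (|g y - g (x j)| + |g (x j) - δ * ((φ i j : ℤ):ℝ)|) + (|h y - h (x j)| + |h (x j) - δ * ((φ i j : ℤ):ℝ)|) :=
              add_le_add (abs_add_le _ _) (abs_add_le _ _)
          _ ≤ ((vg j).toReal + δ/2) + ((vh j).toReal + δ/2) := by
              gcongr
          _ = (vg j).toReal + (vh j).toReal + δ := by ring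
      have hconst : IntegrableOn (fun _ : ℝ => (vg j).toReal + (vh j).toReal + δ)
          (Set.Ico (x j) (x (j+1))) := by
        refine integrableOn_const ?_
        rw [Real.volume_Ico]
        exact ENNReal.ofReal_ne_top
      calc ∫ y in Set.Ico (x j) (x (j+1)), |g y - h y|
          ≤ ∫ _ in Set.Ico (x j) (x (j+1)), ((vg j).toReal + (vh j).toReal + δ) :=
            setIntegral_mono_on hG.integrableOn hconst measurableSet_Ico hpt
        _ = w * ((vg j).toReal + (vh j).toReal + δ) := by
            rw [setIntegral_const, Real.volume_real_Ico, smul_eq_mul,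
              max_eq_left (by linarith : (0:ℝ) ≤ x (j+1) - x j), hxsucc j]
    have hsg : ∑ j ∈ Finset.range m, (vg j).toReal ≤ 2*V := by
      rw [← ENNReal.toReal_sum (fun j _ => hvgfin j)]
      have h1 : ∑ j ∈ Finset.range m, vg j ≤ ENNReal.ofReal (2*V) :=
        ((var_partition g x hxmono m).trans (eVariationOn.mono g (Set.subset_univ _))).trans gv
      have := ENNReal.toReal_mono ENNReal.ofReal_ne_top h1
      rwa [ENNReal.toReal_ofReal (by positivity)] at this
    have hsh : ∑ j ∈ Finset.range m, (vh j).toReal ≤ 2*V := by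
      rw [← ENNReal.toReal_sum (fun j _ => hvhfin j)]
      have h1 : ∑ j ∈ Finset.range m, vh j ≤ ENNReal.ofReal (2*V) :=
        ((var_partition h x hxmono m).trans (eVariationOn.mono h (Set.subset_univ _))).trans hv2
      have := ENNReal.toReal_mono ENNReal.ofReal_ne_top h1
      rwa [ENNReal.toReal_ofReal (by positivity)] at this
    have hmw : (m:ℝ) * w = 2*L := by
      rw [hws, h2L]
      field_simp
    have hw2V : w * (2*V) ≤ ε/2 := by
      rw [hws]
      rw [div_mul_eq_mul_div, div_le_iff₀ hmR]
      have : 8 * t * ε ≤ (m:ℝ) * ε := mul_le_mul_of_nonneg_right hm1 hε.le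
      rw [hts] at this
      have h2 : 8 * (V * L / ε) * ε = 8 * (V*L) := by field_simp
      rw [h2] at this
      nlinarith [h2L]
    have hmwδ : (m:ℝ) * (w * δ) = ε := by
      rw [← mul_assoc, hmw, hδs]
      field_simp
    calc ∫ y, |g y - h y|
        = ∑ j ∈ Finset.range m, ∫ y in Set.Ico (x j) (x (j+1)), |g y - h y| := by
          rw [e1, e2, e3]
      _ ≤ ∑ j ∈ Finset.range m, w * ((vg j).toReal + (vh j).toReal + δ) :=
          Finset.sum_le_sum perint
      _ = w * (∑ j ∈ Finset.range m, (vg j).toReal)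
          + w * (∑ j ∈ Finset.range m, (vh j).toReal) + (m:ℝ) * (w * δ) := by
          have hterm : ∀ j : ℕ, w * ((vg j).toReal + (vh j).toReal + δ)
              = w * (vg j).toReal + w * (vh j).toReal + w * δ := fun j => by ring
          rw [Finset.sum_congr rfl (fun j _ => hterm j), Finset.sum_add_distrib,
            Finset.sum_add_distrib, ← Finset.mul_sum, ← Finset.mul_sum,
            Finset.sum_const, Finset.card_range]
          try rw [nsmul_eq_mul]
          try ring
      _ ≤ ε/2 + ε/2 + ε := by
          have hg1 : w * (∑ j ∈ Finset.range m, (vg j).toReal) ≤ ε/2 := by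
            calc w * (∑ j ∈ Finset.range m, (vg j).toReal) ≤ w * (2*V) :=
                  mul_le_mul_of_nonneg_left hsg hw.le
              _ ≤ ε/2 := hw2V
          have hg2 : w * (∑ j ∈ Finset.range m, (vh j).toReal) ≤ ε/2 := by
            calc w * (∑ j ∈ Finset.range m, (vh j).toReal) ≤ w * (2*V) :=
                  mul_le_mul_of_nonneg_left hsh hw.le
              _ ≤ ε/2 := hw2V
          rw [hmwδ]
          linarith
      _ = 2 * ε := by ring
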